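/- Let M be a smooth manifold and γ : ℝ → M a smooth map that is constant on (−∞, ε] and on [1 − ε, ∞) for some ε ∈ (0, 1/2) (a lazy path). Define c : ℝ → M by c(t) = γ(2t) for t ≤ 1/2 and c(t) = γ(2 − 2t) for t > 1/2 (the composite γ⁻¹γ of γ followed by its reverse). Then c is smooth, and there exists a smooth map H : ℝ × ℝ → M such that H(0, t) = c(t) and H(1, t) = γ(0) for all t, H(s, 0) = H(s, 1) = γ(0) for all s, and at every point the derivative (mfderiv) of H has rank at most 1. In other words, γ⁻¹γ is thinly homotopic to the constant path at γ(0). -/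

import Mathlib

open scoped Manifold

/-- `γ⁻¹γ` is thinly homotopic to the constant path at `γ(0)`.
If `γ` is a lazy path in a smooth manifold `M`, then the composite
`c(t) = γ(2t)` for `t ≤ 1/2`, `c(t) = γ(2 − 2t)` for `t > 1/2` is smooth, and
there is a smooth homotopy `F` from `c` to the constant path at `γ(0)`, fixing
the endpoints, whose derivative (`mfderiv`) has rank at most `1` everywhere. -/
theorem reverse_comp_thin_homotopic_to_const {E : Type*} [NormedAddCommGroup E]
    [NormedSpace ℝ E] {H : Type*} [TopologicalSpace H]
    (I : ModelWithCorners ℝ E H)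
    {M : Type*} [TopologicalSpace M] [ChartedSpace H M]
    [IsManifold I (⊤ : ℕ∞) M]
    (γ : ℝ → M) (hγ : ContMDiff 𝓘(ℝ, ℝ) I (⊤ : ℕ∞) γ)
    (ε : ℝ) (hε : ε ∈ Set.Ioo (0 : ℝ) (1 / 2))
    (hγ0 : ∀ t ≤ ε, γ t = γ 0) (hγ1 : ∀ t, 1 - ε ≤ t → γ t = γ 1)
    (c : ℝ → M)
    (hc : ∀ t : ℝ, c t = if t ≤ 1 / 2 then γ (2 * t) else γ (2 - 2 * t)) :
    ContMDiff 𝓘(ℝ, ℝ) I (⊤ : ℕ∞) c ∧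
    ∃ F : ℝ × ℝ → M,
      ContMDiff 𝓘(ℝ, ℝ × ℝ) I (⊤ : ℕ∞) F ∧
      (∀ t : ℝ, F (0, t) = c t) ∧
      (∀ t : ℝ, F (1, t) = γ 0) ∧
      (∀ s : ℝ, F (s, 0) = γ 0) ∧
      (∀ s : ℝ, F (s, 1) = γ 0) ∧
      (∀ p : ℝ × ℝ,
        LinearMap.rank (mfderiv 𝓘(ℝ, ℝ × ℝ) I F p).toLinearMap ≤ 1) := by
  obtain ⟨hε0, hε2⟩ := hε
  set χ : ℝ → ℝ := fun t => Real.smoothTransition ((1/2 + ε/4 - t) / (ε/2)) with hχdef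
  set φ : ℝ → ℝ := fun t => χ t * (2*t) + (1 - χ t) * (2 - 2*t) with hφdef
  have hχs : ContDiff ℝ (↑(⊤:ℕ∞)) χ := by
    exact Real.smoothTransition.contDiff.comp ((contDiff_const.sub contDiff_id).div_const _)
  have hφs : ContDiff ℝ (↑(⊤:ℕ∞)) φ :=
    (hχs.mul (contDiff_const.mul contDiff_id)).add
      ((contDiff_const.sub hχs).mul (contDiff_const.sub (contDiff_const.mul contDiff_id)))
  -- χ values
  have hχ1 : ∀ t, t ≤ 1/2 - ε/4 → χ t = 1 := by
    intro t ht
    apply Real.smoothTransition.one_of_one_le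
    rw [le_div_iff₀ (by linarith)]
    linarith
  have hχ0 : ∀ t, 1/2 + ε/4 ≤ t → χ t = 0 := by
    intro t ht
    apply Real.smoothTransition.zero_of_nonpos
    apply div_nonpos_of_nonpos_of_nonneg _ (by linarith)
    linarith
  -- key: γ ∘ φ = c
  have hkey : ∀ t, γ (φ t) = c t := by
    intro t
    rw [hc]
    rcases le_or_gt t (1/2 - ε/4) with h1 | h1
    · rw [if_pos (by linarith), hφdef]
      simp only [hχ1 t h1]
      ring_nf
    · rcases le_or_gt (1/2 + ε/4) t with h2 | h2
      · rw [if_neg (by push_neg; linarith), hφdef]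
        simp only [hχ0 t h2]
        ring_nf
      · -- middle: both sides equal γ 1
        have hc0 : (0:ℝ) ≤ χ t := Real.smoothTransition.nonneg _
        have hc1 : χ t ≤ 1 := Real.smoothTransition.le_one _
        have hφge : 1 - ε ≤ φ t := by
          have ha : (1 : ℝ) - ε/2 ≤ 2*t := by linarith
          have hb : (1 : ℝ) - ε/2 ≤ 2 - 2*t := by linarith
          have := add_le_add (mul_le_mul_of_nonneg_left ha hc0)
            (mul_le_mul_of_nonneg_left hb (by linarith : (0:ℝ) ≤ 1 - χ t))
          rw [hφdef]
          simp only []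
          nlinarith
        rw [hγ1 _ hφge]
        rcases le_or_gt t (1/2) with h3 | h3
        · rw [if_pos h3, hγ1 (2*t) (by linarith)]
        · rw [if_neg (by push_neg; exact h3), hγ1 (2 - 2*t) (by linarith)]
  have hφ0 : φ 0 = 0 := by
    rw [hφdef]; simp only [hχ1 0 (by linarith)]; ring
  have hφ1 : φ 1 = 0 := by
    rw [hφdef]; simp only [hχ0 1 (by linarith)]; ring
  have hcsmooth : ContMDiff 𝓘(ℝ, ℝ) I (⊤ : ℕ∞) c := by
    have : c = γ ∘ φ := funext fun t => (hkey t).symm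
    rw [this]
    exact hγ.comp hφs.contMDiff
  refine ⟨hcsmooth, ?_⟩
  set g : ℝ × ℝ → ℝ := fun p => (1 - p.1) * φ p.2 with hgdef
  have hgs : ContDiff ℝ (↑(⊤:ℕ∞)) g :=
    (contDiff_const.sub contDiff_fst).mul (hφs.comp contDiff_snd)
  refine ⟨γ ∘ g, hγ.comp hgs.contMDiff, ?_, ?_, ?_, ?_, ?_⟩
  · intro t
    simp only [Function.comp, hgdef, sub_zero, one_mul]
    exact hkey t
  · intro t
    simp only [Function.comp, hgdef, sub_self, zero_mul]
  · intro s
    simp only [Function.comp, hgdef, hφ0, mul_zero]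
  · intro s
    simp only [Function.comp, hgdef, hφ1, mul_zero]
  · intro p
    have hdγ : MDifferentiableAt 𝓘(ℝ, ℝ) I γ (g p) := hγ.mdifferentiableAt (by simp)
    have hdg : MDifferentiableAt 𝓘(ℝ, ℝ × ℝ) 𝓘(ℝ, ℝ) g p :=
      (hgs.contMDiff).mdifferentiableAt (by simp)
    rw [mfderiv_comp p hdγ hdg, ContinuousLinearMap.toLinearMap_comp]
    have h1 : LinearMap.rank (mfderiv 𝓘(ℝ, ℝ × ℝ) 𝓘(ℝ, ℝ) g p).toLinearMap ≤ 1 :=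
      (LinearMap.rank_le_range _).trans_eq (Module.rank_self ℝ)
    have h2 := LinearMap.lift_rank_comp_le_right
      (mfderiv 𝓘(ℝ, ℝ × ℝ) 𝓘(ℝ, ℝ) g p).toLinearMap
      (mfderiv 𝓘(ℝ, ℝ) I γ (g p)).toLinearMap
    have h3 := h2.trans (Cardinal.lift_le.mpr h1)
    simpa using h3
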